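/- Let a ∈ ℝ^N, let D = diag(a) be the N×N diagonal matrix with diagonal entries a, and let k be an integer with 1 ≤ k ≤ N. Then the minimum of tr(XᵀDX) over all X ∈ ℝ^{N×k} with XᵀX = I_k is attained and equals the sum of the k smallest entries of a. -/

import Mathlib

open Finset Matrix

lemma sum_filter_lt {M : Type*} [AddCommMonoid M] {N k : ℕ} (hk2 : k ≤ N) (f : Fin N → M) :
    ∑ i ∈ univ.filter (fun i : Fin N => (i : ℕ) < k), f i = ∑ j : Fin k, f (Fin.castLE hk2 j) := by
  refine Finset.sum_bij' (fun (i : Fin N) hi => (⟨(i : ℕ), by simpa using hi⟩ : Fin k))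
    (fun j _ => Fin.castLE hk2 j) ?_ ?_ ?_ ?_ ?_
  · intro i hi; simp
  · intro j hj; simp [j.isLt]
  · intro i hi; rfl
  · intro j hj; rfl
  · intro i hi; rfl

lemma key_ineq {N k : ℕ} (hk1 : 1 ≤ k) (hk2 : k ≤ N) (b w : Fin N → ℝ)
    (hb : Monotone b) (hw0 : ∀ i, 0 ≤ w i) (hw1 : ∀ i, w i ≤ 1)
    (hsum : ∑ i, w i = (k : ℝ)) :
    ∑ i ∈ univ.filter (fun i : Fin N => (i : ℕ) < k), b i ≤ ∑ i, b i * w i := by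
  have hkN : k - 1 < N := lt_of_lt_of_le (Nat.sub_lt hk1 one_pos) hk2
  set t : ℝ := b ⟨k - 1, hkN⟩ with ht
  have hpt : ∀ i : Fin N,
      t * w i + (if (i : ℕ) < k then b i - t else 0) ≤ b i * w i := by
    intro i
    by_cases hik : (i : ℕ) < k
    · have hbi : b i ≤ t := by
        apply hb; simp only [Fin.le_def]; omega
      simp only [hik, if_pos]
      nlinarith [hw1 i, hw0 i]
    · have hbi : t ≤ b i := by
        apply hb; simp only [Fin.le_def]; omega
      simp only [hik, if_neg, not_false_iff]
      nlinarith [hw0 i]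
  calc ∑ i ∈ univ.filter (fun i : Fin N => (i : ℕ) < k), b i
      = ∑ i : Fin N, (t * w i + (if (i : ℕ) < k then b i - t else 0)) := by
        rw [Finset.sum_add_distrib, ← Finset.mul_sum, hsum, ← Finset.sum_filter]
        have hcard : (univ.filter (fun i : Fin N => (i : ℕ) < k)).card = k := by
          have := sum_filter_lt (M := ℕ) hk2 (fun _ => 1)
          simpa using this
        rw [Finset.sum_sub_distrib, Finset.sum_const, hcard]
        ring
    _ ≤ ∑ i, b i * w i := Finset.sum_le_sum fun i _ => hpt i


/-- The minimum of `tr (Xᵀ D X)` over all `X ∈ ℝ^{N×k}` with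
orthonormal columns, where `D = diag a`, is attained and equals the sum of
the `k` smallest entries of `a`. -/
theorem stmt_15 (N k : ℕ) (a : Fin N → ℝ) (hk1 : 1 ≤ k) (hk2 : k ≤ N) :
    ∃ m : ℝ,
      IsLeast {s : ℝ | ∃ φ : Fin k → Fin N, Function.Injective φ ∧
          s = ∑ j : Fin k, a (φ j)} m ∧
      IsLeast {v : ℝ | ∃ X : Matrix (Fin N) (Fin k) ℝ,
          Xᵀ * X = 1 ∧ v = (Xᵀ * Matrix.diagonal a * X).trace} m := by
  classical
  set σ : Equiv.Perm (Fin N) := Tuple.sort a with hσ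
  have hmono : Monotone (a ∘ σ) := Tuple.monotone_sort a
  set φ₀ : Fin k → Fin N := fun j => σ (Fin.castLE hk2 j) with hφ₀
  have hφ₀inj : Function.Injective φ₀ :=
    σ.injective.comp (Fin.castLE_injective hk2)
  set T : Finset ℝ :=
    (univ.filter (fun φ : Fin k → Fin N => Function.Injective φ)).image
      (fun φ => ∑ j, a (φ j)) with hT
  have hTmem : ∀ s : ℝ, s ∈ T ↔ ∃ φ : Fin k → Fin N, Function.Injective φ ∧
      s = ∑ j, a (φ j) := by
    intro s
    simp only [hT, Finset.mem_image, Finset.mem_filter, Finset.mem_univ, true_and]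
    constructor
    · rintro ⟨φ, hφ, rfl⟩; exact ⟨φ, hφ, rfl⟩
    · rintro ⟨φ, hφ, rfl⟩; exact ⟨φ, hφ, rfl⟩
  have hne : T.Nonempty := ⟨_, (hTmem _).mpr ⟨φ₀, hφ₀inj, rfl⟩⟩
  set m : ℝ := T.min' hne with hm
  have hmT : m ∈ T := T.min'_mem hne
  refine ⟨m, ⟨(hTmem m).mp hmT, ?_⟩, ?_, ?_⟩
  · rintro s hs
    exact T.min'_le s ((hTmem s).mpr hs)
  · -- membership in second set
    obtain ⟨φ, hφ, hmsum⟩ := (hTmem m).mp hmT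
    refine ⟨Matrix.of (fun i j => if i = φ j then (1 : ℝ) else 0), ?_, ?_⟩
    · ext j j'
      simp only [Matrix.mul_apply, Matrix.transpose_apply, Matrix.of_apply,
        Matrix.one_apply, ite_mul, one_mul, zero_mul, Finset.sum_ite_eq,
        Finset.mem_univ, if_true]
      by_cases h : j = j'
      · subst h; simp
      · have : φ j ≠ φ j' := fun he => h (hφ he)
        simp [h, this]
    · rw [hmsum, Matrix.trace]
      congr 1
      ext j
      simp only [Matrix.diag_apply, Matrix.mul_apply, Matrix.mul_diagonal,
        Matrix.transpose_apply, Matrix.of_apply, ite_mul, one_mul, zero_mul,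
        mul_ite, mul_one, mul_zero]
      simp
  · -- lower bound for second set
    rintro v ⟨X, hX, rfl⟩
    set P : Matrix (Fin N) (Fin N) ℝ := X * Xᵀ with hP
    have hPP : P * P = P := by
      rw [hP, Matrix.mul_assoc, ← Matrix.mul_assoc Xᵀ X Xᵀ, hX, Matrix.one_mul]
    have hsymm : ∀ i j, P j i = P i j := by
      intro i j
      simp [hP, Matrix.mul_apply, Matrix.transpose_apply, mul_comm]
    have hw0 : ∀ i, 0 ≤ P i i := by
      intro i
      rw [hP]
      simp only [Matrix.mul_apply, Matrix.transpose_apply]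
      exact Finset.sum_nonneg fun j _ => mul_self_nonneg _
    have hsq : ∀ i, P i i ^ 2 ≤ P i i := by
      intro i
      conv_rhs => rw [← hPP]
      rw [Matrix.mul_apply]
      calc P i i ^ 2 = P i i * P i i := pow_two (P i i)
        _ ≤ ∑ j, P i j * P j i := by
            refine Finset.single_le_sum (f := fun j => P i j * P j i) ?_ (Finset.mem_univ i)
            intro j _
            show 0 ≤ P i j * P j i
            rw [hsymm i j]
            exact mul_self_nonneg _
    have hw1 : ∀ i, P i i ≤ 1 := by
      intro i
      nlinarith [hsq i, hw0 i]
    have hsum : ∑ i, P i i = (k : ℝ) := by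
      have h1 : ∑ i, P i i = P.trace := rfl
      rw [h1, hP, Matrix.trace_mul_comm, hX, Matrix.trace_one]
      simp
    have htr : (Xᵀ * Matrix.diagonal a * X).trace = ∑ i, a i * P i i := by
      rw [Matrix.trace_mul_comm, ← Matrix.mul_assoc, ← hP]
      rw [Matrix.trace]
      rw [show P * (Matrix.diagonal a) = Matrix.of (fun i j => P i j * a j) by
        ext i j; simp [Matrix.mul_diagonal]]
      simp [Matrix.diag, mul_comm]
    rw [htr]
    have hre : ∑ i, a i * P i i = ∑ i, (a ∘ σ) i * P (σ i) (σ i) := by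
      exact (Equiv.sum_comp σ (fun i => a i * P i i)).symm
    rw [hre]
    have hkey := key_ineq hk1 hk2 (a ∘ σ) (fun i => P (σ i) (σ i)) hmono
      (fun i => hw0 _) (fun i => hw1 _)
      (by rw [Equiv.sum_comp σ (fun i => P i i)]; exact hsum)
    refine le_trans ?_ hkey
    rw [sum_filter_lt hk2]
    exact T.min'_le _ ((hTmem _).mpr ⟨φ₀, hφ₀inj, rfl⟩)
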